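/- (Distance bound for the level-0 homology of the double product: d̆_0 ≥ min[d̃_{−1}, max(d̃_0, d̃_{−1}ᵀ), d̃_0ᵀ].) Let δ_{−1} ∈ M_{n0 × n_{−1}}(F2) and δ_0 ∈ M_{n1 × n0}(F2) satisfy δ_0·δ_{−1} = 0. Suppose R_a ∈ M_{n_{−1} × n_{−1}}(F2), R_b ∈ M_{n0 × n0}(F2), R_c ∈ M_{n1 × n1}(F2) satisfy R_b·δ_{−1} = δ_{−1}·R_a and δ_0·R_b = R_c·δ_0, and that there are no U ∈ M_{n_{−1} × n0}(F2) and V ∈ M_{n0 × n1}(F2) with R_a = U·δ_{−1}, R_b = δ_{−1}·U + V·δ_0 and R_c = δ_0·V (i.e. (R_a, R_b, R_c) is a nontrivial cycle of the double product). Let W := |R_a| + |R_b| + |R_c|. Then at least one of the following holds: (i) there is a nonzero c with δ_{−1}·c = 0 and |c| ≤ W; (ii) there exist both a vector c with δ_0·c = 0, c not in the image of δ_{−1}, |c| ≤ W, and a vector c' with δ_{−1}ᵀ·c' = 0, c' not in the image of δ_0ᵀ, |c'| ≤ W; (iii) there is a nonzero c with δ_0ᵀ·c = 0 and |c| ≤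 W. -/

import Mathlib

open Matrix
open scoped Kronecker

abbrev F2 := ZMod 2

/-- Hamming weight of a vector over `F2`. -/
def vwt {ι : Type*} [Fintype ι] (v : ι → F2) : ℕ :=
  (Finset.univ.filter fun i => v i ≠ 0).card

/-- Hamming weight of a matrix over `F2` (number of nonzero entries). -/
def mwt {ι κ : Type*} [Fintype ι] [Fintype κ] (M : Matrix ι κ F2) : ℕ :=
  (Finset.univ.filter fun p : ι × κ => M p.1 p.2 ≠ 0).card

/-- Nullity of a matrix over `F2`: dimension of the kernel of the induced linear map. -/
noncomputable def nullity {ι κ : Type*} [Fintype ι] [Fintype κ] (M : Matrix ι κ F2) : ℕ :=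
  Module.finrank F2 (LinearMap.ker M.mulVecLin)

lemma vwt_mulVec_le {m n : ℕ} (M : Matrix (Fin m) (Fin n) F2) (x : Fin n → F2) :
    vwt (M.mulVec x) ≤ mwt M := by
  classical
  have key : ∀ i, (M.mulVec x) i ≠ 0 → ∃ j, M i j ≠ 0 := by
    intro i hi
    by_contra h
    push_neg at h
    apply hi
    simp [Matrix.mulVec, dotProduct, h]
  unfold vwt mwt
  by_cases hn : Nonempty (Fin n)
  · have : Inhabited (Fin n) := ⟨hn.some⟩
    apply Finset.card_le_card_of_injOn
      (fun i => (i, if h : ∃ j, M i j ≠ 0 then h.choose else default))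
    · intro i hi
      simp only [Finset.mem_coe, Finset.mem_filter, Finset.mem_univ, true_and] at hi ⊢
      have h := key i hi
      rw [dif_pos h]
      exact h.choose_spec
    · intro a _ b _ hab
      exact congrArg Prod.fst hab
  · have : ∀ i, M.mulVec x i = 0 := by
      intro i
      have : IsEmpty (Fin n) := not_nonempty_iff.mp hn
      simp only [Matrix.mulVec, dotProduct]
      rw [Finset.univ_eq_empty, Finset.sum_empty]
    simp [this]

lemma mwt_transpose {m n : ℕ} (M : Matrix (Fin m) (Fin n) F2) : mwt Mᵀ = mwt M := by
  classical
  unfold mwt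
  apply Finset.card_nbij (fun p => (p.2, p.1))
  · intro p hp
    simp only [SetLike.mem_coe, Finset.mem_coe, Finset.mem_filter, Finset.mem_univ, true_and,
      Matrix.transpose_apply] at hp ⊢
    exact (Finset.mem_filter.mp hp).2
  · intro a _ b _ hab
    simp only [Prod.mk.injEq] at hab
    exact Prod.ext hab.2 hab.1
  · intro p hp
    refine ⟨(p.2, p.1), ?_, rfl⟩
    simp only [SetLike.mem_coe, Finset.mem_coe, Finset.mem_filter, Finset.mem_univ, true_and,
      Matrix.transpose_apply] at hp ⊢
    exact Finset.mem_filter.mpr ⟨Finset.mem_univ _, hp⟩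

lemma exists_dot_certificate {m : ℕ} (p : Submodule F2 (Fin m → F2)) (v : Fin m → F2)
    (hv : v ∉ p) : ∃ z : Fin m → F2, (∀ w ∈ p, z ⬝ᵥ w = 0) ∧ z ⬝ᵥ v ≠ 0 := by
  classical
  have hnz : (Submodule.Quotient.mk v : (Fin m → F2) ⧸ p) ≠ 0 := by
    simpa [Submodule.Quotient.mk_eq_zero] using hv
  have := (Module.forall_dual_apply_eq_zero_iff F2
    ((Submodule.Quotient.mk v : (Fin m → F2) ⧸ p))).not
  rw [not_forall] at this
  obtain ⟨φ, hφ⟩ := this.mpr hnz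
  set f : (Fin m → F2) →ₗ[F2] F2 := φ ∘ₗ p.mkQ with hf
  have hfp : ∀ w ∈ p, f w = 0 := by
    intro w hw
    simp [hf, (Submodule.Quotient.mk_eq_zero p).mpr hw]
  have hfv : f v ≠ 0 := hφ
  refine ⟨fun i => f (fun j => if i = j then 1 else 0), ?_, ?_⟩
  · intro w hw
    have hrep : ∀ u : Fin m → F2,
        (fun i => f (fun j => if i = j then 1 else 0)) ⬝ᵥ u = f u := by
      intro u
      conv_rhs => rw [pi_eq_sum_univ u, map_sum]
      unfold dotProduct
      apply Finset.sum_congr rfl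
      intro i _
      rw [LinearMap.map_smul]
      simp [mul_comm, eq_comm]
    rw [hrep w, hfp w hw]
  · have hrep : (fun i => f (fun j => if i = j then 1 else 0)) ⬝ᵥ v = f v := by
      conv_rhs => rw [pi_eq_sum_univ v, map_sum]
      unfold dotProduct
      apply Finset.sum_congr rfl
      intro i _
      rw [LinearMap.map_smul]
      simp [mul_comm, eq_comm]
    rw [hrep]
    exact hfv

lemma mem_range_of_dot {m n : ℕ} (M : Matrix (Fin m) (Fin n) F2) (v : Fin m → F2)
    (h : ∀ z, Mᵀ.mulVec z = 0 → z ⬝ᵥ v = 0) : v ∈ LinearMap.range M.mulVecLin := by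
  classical
  by_contra hv
  obtain ⟨z, hz0, hzv⟩ := exists_dot_certificate _ v hv
  apply hzv
  apply h z
  ext j
  have hcol : M.mulVec (fun k => if k = j then 1 else 0) ∈ LinearMap.range M.mulVecLin :=
    ⟨_, rfl⟩
  have := hz0 _ hcol
  simp only [Matrix.mulVec, dotProduct, Pi.zero_apply, Matrix.transpose_apply] at this ⊢
  rw [← this]
  apply Finset.sum_congr rfl
  intro i _
  rw [Finset.mul_sum]
  rw [Finset.sum_eq_single j]
  · simp [mul_comm]
  · intro b _ hb
    simp [hb]
  · simp

variable {V W X : Type*} [AddCommGroup V] [AddCommGroup W] [AddCommGroup X]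
  [Module F2 V] [Module F2 W] [Module F2 X]

lemma factor_through (g : V →ₗ[F2] W) (f : V →ₗ[F2] X)
    (h : LinearMap.ker g ≤ LinearMap.ker f) : ∃ u : W →ₗ[F2] X, u ∘ₗ g = f := by
  obtain ⟨s, hs⟩ := g.rangeRestrict.exists_rightInverse_of_surjective
    (LinearMap.range_eq_top.2 g.surjective_rangeRestrict)
  obtain ⟨q, hq⟩ := (LinearMap.range g).exists_isCompl
  refine ⟨(f ∘ₗ s) ∘ₗ (Submodule.linearProjOfIsCompl _ q hq), ?_⟩
  ext x
  simp only [LinearMap.comp_apply]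
  have h1 : (Submodule.linearProjOfIsCompl _ q hq) (g x)
      = ⟨g x, LinearMap.mem_range_self g x⟩ := by
    exact Submodule.linearProjOfIsCompl_apply_left hq ⟨g x, LinearMap.mem_range_self g x⟩
  rw [h1]
  have h2 : g (s ⟨g x, LinearMap.mem_range_self g x⟩) = g x := by
    have := congrFun (congrArg (fun (t : LinearMap.range g →ₗ[F2] LinearMap.range g) => (t : LinearMap.range g → LinearMap.range g)) hs) ⟨g x, LinearMap.mem_range_self g x⟩
    simpa [LinearMap.comp_apply] using congrArg Subtype.val this
  have h3 : s ⟨g x, LinearMap.mem_range_self g x⟩ - x ∈ LinearMap.ker g := by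
    rw [LinearMap.mem_ker, map_sub, h2, sub_self]
  have h4 := h h3
  rw [LinearMap.mem_ker, map_sub, sub_eq_zero] at h4
  exact h4

lemma factor_sub (g : W →ₗ[F2] X) (f : V →ₗ[F2] X)
    (h : LinearMap.range f ≤ LinearMap.range g) : ∃ v : V →ₗ[F2] W, g ∘ₗ v = f := by
  obtain ⟨s, hs⟩ := g.rangeRestrict.exists_rightInverse_of_surjective
    (LinearMap.range_eq_top.2 g.surjective_rangeRestrict)
  refine ⟨s ∘ₗ (f.codRestrict (LinearMap.range g) (fun x => h (LinearMap.mem_range_self f x))), ?_⟩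
  ext x
  simp only [LinearMap.comp_apply, LinearMap.codRestrict_apply]
  change g (s ⟨f x, h (LinearMap.mem_range_self f x)⟩) = f x
  have := congrFun (congrArg (fun (t : LinearMap.range g →ₗ[F2] LinearMap.range g) => (t : LinearMap.range g → LinearMap.range g)) hs) ⟨f x, h (LinearMap.mem_range_self f x)⟩
  simpa [LinearMap.comp_apply] using congrArg Subtype.val this

lemma mat_add_self {a b : ℕ} (M : Matrix (Fin a) (Fin b) F2) : M + M = 0 := by
  ext i j
  simp only [Matrix.add_apply, Matrix.zero_apply]
  exact CharTwo.add_self_eq_zero _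

lemma mulVecLin_inj {a b : ℕ} {M N : Matrix (Fin a) (Fin b) F2}
    (h : M.mulVecLin = N.mulVecLin) : M = N := by
  rw [← Matrix.toLin'_apply', ← Matrix.toLin'_apply'] at h
  exact Matrix.toLin'.injective h

lemma mulVecLin_toMatrix' {a b : ℕ} (f : (Fin a → F2) →ₗ[F2] (Fin b → F2)) :
    (LinearMap.toMatrix' f).mulVecLin = f := by
  rw [← Matrix.toLin'_apply', Matrix.toLin'_toMatrix']


/-- distance bound for level-0 homology of the double product:
`d̆₀ ≥ min[d̃₋₁, max(d̃₀, d̃₋₁ᵀ), d̃₀ᵀ]`, in reshaped matrix form. -/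
theorem double_product_level0_distance
    (nm1 n0 n1 : ℕ)
    (dm1 : Matrix (Fin n0) (Fin nm1) F2) (d0 : Matrix (Fin n1) (Fin n0) F2)
    (hchain : d0 * dm1 = 0)
    (Ra : Matrix (Fin nm1) (Fin nm1) F2) (Rb : Matrix (Fin n0) (Fin n0) F2)
    (Rc : Matrix (Fin n1) (Fin n1) F2)
    (hcycle1 : Rb * dm1 = dm1 * Ra)
    (hcycle2 : d0 * Rb = Rc * d0)
    (hnontriv : ¬ ∃ (U : Matrix (Fin nm1) (Fin n0) F2) (V : Matrix (Fin n0) (Fin n1) F2),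
      Ra = U * dm1 ∧ Rb = dm1 * U + V * d0 ∧ Rc = d0 * V) :
    (∃ c : Fin nm1 → F2, c ≠ 0 ∧ dm1.mulVec c = 0 ∧
      vwt c ≤ mwt Ra + mwt Rb + mwt Rc) ∨
    ((∃ c : Fin n0 → F2, d0.mulVec c = 0 ∧ (¬ ∃ y : Fin nm1 → F2, dm1.mulVec y = c) ∧
        vwt c ≤ mwt Ra + mwt Rb + mwt Rc) ∧
     (∃ c' : Fin n0 → F2, dm1ᵀ.mulVec c' = 0 ∧ (¬ ∃ y : Fin n1 → F2, d0ᵀ.mulVec y = c') ∧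
        vwt c' ≤ mwt Ra + mwt Rb + mwt Rc)) ∨
    (∃ c : Fin n1 → F2, c ≠ 0 ∧ d0ᵀ.mulVec c = 0 ∧
      vwt c ≤ mwt Ra + mwt Rb + mwt Rc) := by
  classical
  by_cases hA : ∃ x, dm1.mulVec x = 0 ∧ Ra.mulVec x ≠ 0
  · obtain ⟨x, hx, hax⟩ := hA
    left
    refine ⟨Ra.mulVec x, hax, ?_, ?_⟩
    · rw [Matrix.mulVec_mulVec, ← hcycle1, ← Matrix.mulVec_mulVec, hx, Matrix.mulVec_zero]
    · have := vwt_mulVec_le Ra x; omega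
  by_cases hC : ∃ y, d0ᵀ.mulVec y = 0 ∧ Rcᵀ.mulVec y ≠ 0
  · obtain ⟨y, hy, hcy⟩ := hC
    right; right
    refine ⟨Rcᵀ.mulVec y, hcy, ?_, ?_⟩
    · rw [Matrix.mulVec_mulVec, ← Matrix.transpose_mul, ← hcycle2, Matrix.transpose_mul,
        ← Matrix.mulVec_mulVec, hy, Matrix.mulVec_zero]
    · have := vwt_mulVec_le Rcᵀ y; rw [mwt_transpose] at this; omega
  by_cases hB : ∃ z x, dm1ᵀ.mulVec z = 0 ∧ d0.mulVec x = 0 ∧ z ⬝ᵥ Rb.mulVec x ≠ 0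
  · obtain ⟨z, x, hz, hx, hzx⟩ := hB
    right; left
    constructor
    · refine ⟨Rb.mulVec x, ?_, ?_, ?_⟩
      · rw [Matrix.mulVec_mulVec, hcycle2, ← Matrix.mulVec_mulVec, hx, Matrix.mulVec_zero]
      · rintro ⟨y, hy⟩
        apply hzx
        rw [← hy, Matrix.dotProduct_mulVec, ← Matrix.mulVec_transpose, hz,
          zero_dotProduct]
      · have := vwt_mulVec_le Rb x; omega
    · refine ⟨Rbᵀ.mulVec z, ?_, ?_, ?_⟩
      · rw [Matrix.mulVec_mulVec, ← Matrix.transpose_mul, hcycle1, Matrix.transpose_mul,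
          ← Matrix.mulVec_mulVec, hz, Matrix.mulVec_zero]
      · rintro ⟨y, hy⟩
        apply hzx
        have h1 : x ⬝ᵥ (Rbᵀ.mulVec z) = 0 := by
          rw [← hy, Matrix.dotProduct_mulVec, ← Matrix.mulVec_transpose,
            Matrix.transpose_transpose, hx, zero_dotProduct]
        rw [Matrix.dotProduct_mulVec, ← Matrix.mulVec_transpose,
          Matrix.transpose_transpose] at h1
        rw [dotProduct_comm] at h1
        exact h1
      · have := vwt_mulVec_le Rbᵀ z; rw [mwt_transpose] at this; omega
  exfalso
  apply hnontriv
  push_neg at hA hC hB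
  -- Step 1: factor Ra through dm1
  obtain ⟨u, hu⟩ := factor_through dm1.mulVecLin Ra.mulVecLin (by
    intro x hx
    rw [LinearMap.mem_ker] at hx ⊢
    exact hA x hx)
  -- Step 2: factor Rc through d0
  obtain ⟨v, hv⟩ := factor_sub d0.mulVecLin Rc.mulVecLin (by
    rintro w ⟨y, rfl⟩
    apply mem_range_of_dot
    intro zz hzz
    rw [Matrix.mulVecLin_apply, Matrix.dotProduct_mulVec, ← Matrix.mulVec_transpose,
      hC zz hzz, zero_dotProduct])
  set U0 : Matrix (Fin nm1) (Fin n0) F2 := LinearMap.toMatrix' u with hU0def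
  set V0 : Matrix (Fin n0) (Fin n1) F2 := LinearMap.toMatrix' v with hV0def
  have hU0 : U0 * dm1 = Ra := by
    apply mulVecLin_inj
    rw [Matrix.mulVecLin_mul, hU0def, mulVecLin_toMatrix', hu]
  have hV0 : d0 * V0 = Rc := by
    apply mulVecLin_inj
    rw [Matrix.mulVecLin_mul, hV0def, mulVecLin_toMatrix', hv]
  set Rb' : Matrix (Fin n0) (Fin n0) F2 := Rb + dm1 * U0 + V0 * d0 with hRb'def
  have hb1 : Rb' * dm1 = 0 := by
    rw [hRb'def, Matrix.add_mul, Matrix.add_mul, hcycle1, Matrix.mul_assoc, hU0,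
      Matrix.mul_assoc, hchain, Matrix.mul_zero, add_zero, mat_add_self]
  have hb2 : d0 * Rb' = 0 := by
    rw [hRb'def, Matrix.mul_add, Matrix.mul_add, hcycle2, ← Matrix.mul_assoc, hchain,
      Matrix.zero_mul, add_zero, ← Matrix.mul_assoc, hV0, mat_add_self]
  have hb3 : ∀ x, d0.mulVec x = 0 → Rb'.mulVec x ∈ LinearMap.range dm1.mulVecLin := by
    intro x hx
    apply mem_range_of_dot
    intro z hz
    have e1 : Rb'.mulVec x = Rb.mulVec x + dm1.mulVec (U0.mulVec x) + V0.mulVec (d0.mulVec x) := by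
      rw [hRb'def, Matrix.add_mulVec, Matrix.add_mulVec, Matrix.mulVec_mulVec,
        Matrix.mulVec_mulVec]
    rw [e1, hx, Matrix.mulVec_zero, add_zero, dotProduct_add, hB z x hz hx,
      Matrix.dotProduct_mulVec, ← Matrix.mulVec_transpose, hz, zero_dotProduct,
      add_zero]
  -- linear maps
  set d1L := dm1.mulVecLin with hd1L
  set d0L := d0.mulVecLin with hd0L
  set B' := Rb'.mulVecLin with hB'
  have hB'd1 : ∀ x, B' (d1L x) = 0 := by
    intro x
    show Rb'.mulVec (dm1.mulVec x) = 0
    rw [Matrix.mulVec_mulVec, hb1, Matrix.zero_mulVec]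
  have hd0B' : ∀ x, d0L (B' x) = 0 := by
    intro x
    show d0.mulVec (Rb'.mulVec x) = 0
    rw [Matrix.mulVec_mulVec, hb2, Matrix.zero_mulVec]
  -- complement of ker d0L
  obtain ⟨q, hq⟩ := (LinearMap.ker d0L).exists_isCompl
  set K := LinearMap.ker d0L with hK
  set piK := Submodule.linearProjOfIsCompl K q hq with hpiK
  set piq := Submodule.linearProjOfIsCompl q K hq.symm with hpiq
  have hdecomp : ∀ x, ((piK x : Fin n0 → F2)) + ((piq x : Fin n0 → F2)) = x := fun x =>
    Submodule.projection_add_projection_eq_self hq x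
  -- build b
  set f1 : (Fin n0 → F2) →ₗ[F2] (Fin n0 → F2) := B' ∘ₗ (q.subtype ∘ₗ piq) with hf1
  obtain ⟨b0, hb0⟩ := factor_through d0L f1 (by
    intro x hx
    rw [LinearMap.mem_ker]
    have : piq x = 0 := Submodule.linearProjOfIsCompl_apply_right' hq.symm hx
    simp [hf1, this])
  set bmap : (Fin n1 → F2) →ₗ[F2] (Fin n0 → F2) := (K.subtype ∘ₗ piK) ∘ₗ b0 with hbmap
  have hbd : ∀ y, d0L (bmap y) = 0 := by
    intro y
    have hmem : ((piK (b0 y) : Fin n0 → F2)) ∈ K := (piK (b0 y)).2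
    simpa [hbmap] using hmem
  have hbcomp : ∀ x, bmap (d0L x) = f1 x := by
    intro x
    have h1 : b0 (d0L x) = f1 x := LinearMap.congr_fun hb0 x
    have hmem : f1 x ∈ K := by
      rw [hK, LinearMap.mem_ker]
      exact hd0B' _
    have h2 : piK (f1 x) = ⟨f1 x, hmem⟩ := Submodule.linearProjOfIsCompl_apply_left hq ⟨f1 x, hmem⟩
    simp [hbmap, h1, h2]
  -- build a
  set f2 : (Fin n0 → F2) →ₗ[F2] (Fin n0 → F2) := B' ∘ₗ (K.subtype ∘ₗ piK) with hf2
  obtain ⟨a0, ha0⟩ := factor_sub d1L f2 (by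
    rintro w ⟨x, rfl⟩
    exact hb3 _ (LinearMap.mem_ker.mp (piK x).2))
  obtain ⟨r, hr⟩ := (LinearMap.range d1L).exists_isCompl
  set R := LinearMap.range d1L with hR
  set rho : (Fin n0 → F2) →ₗ[F2] (Fin n0 → F2) := r.subtype ∘ₗ (Submodule.linearProjOfIsCompl r R hr.symm) with hrho
  set amap : (Fin n0 → F2) →ₗ[F2] (Fin nm1 → F2) := a0 ∘ₗ rho with hamap
  have had1 : ∀ x, amap (d1L x) = 0 := by
    intro x
    have : Submodule.linearProjOfIsCompl r R hr.symm (d1L x) = 0 :=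
      Submodule.linearProjOfIsCompl_apply_right' hr.symm (LinearMap.mem_range_self _ x)
    simp [hamap, hrho, this]
  have hf2R : ∀ w ∈ R, f2 w = 0 := by
    rintro w ⟨x, rfl⟩
    have hmem : d1L x ∈ K := by
      rw [hK, LinearMap.mem_ker]
      show d0.mulVec (dm1.mulVec x) = 0
      rw [Matrix.mulVec_mulVec, hchain, Matrix.zero_mulVec]
    have h2 : piK (d1L x) = ⟨d1L x, hmem⟩ := Submodule.linearProjOfIsCompl_apply_left hq ⟨d1L x, hmem⟩
    simp only [hf2, LinearMap.comp_apply, h2, Submodule.coe_subtype]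
    exact hB'd1 x
  have hacomp : ∀ x, d1L (amap x) = f2 x := by
    intro x
    have h1 : d1L (a0 (rho x)) = f2 (rho x) := LinearMap.congr_fun ha0 (rho x)
    have hsplit : ((Submodule.linearProjOfIsCompl R r hr x : Fin n0 → F2)) + ((Submodule.linearProjOfIsCompl r R hr.symm x : Fin n0 → F2)) = x :=
      Submodule.projection_add_projection_eq_self hr x
    have h3 : f2 x = f2 ((Submodule.linearProjOfIsCompl R r hr x : Fin n0 → F2)) + f2 (rho x) := by
      conv_lhs => rw [← hsplit]
      rw [map_add]
      rfl
    have h4 : f2 ((Submodule.linearProjOfIsCompl R r hr x : Fin n0 → F2)) = 0 :=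
      hf2R _ (Submodule.linearProjOfIsCompl R r hr x).2
    rw [hamap, LinearMap.comp_apply, h1, h3, h4, zero_add]
  have hsum : ∀ x, d1L (amap x) + bmap (d0L x) = B' x := by
    intro x
    rw [hacomp, hbcomp]
    have : f2 x + f1 x = B' ((piK x : Fin n0 → F2)) + B' ((piq x : Fin n0 → F2)) := rfl
    rw [this, ← map_add, hdecomp]
  -- back to matrices
  set A : Matrix (Fin nm1) (Fin n0) F2 := LinearMap.toMatrix' amap with hAdef
  set Bm : Matrix (Fin n0) (Fin n1) F2 := LinearMap.toMatrix' bmap with hBmdef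
  have hAd : A * dm1 = 0 := by
    apply mulVecLin_inj
    rw [Matrix.mulVecLin_mul, hAdef, mulVecLin_toMatrix', Matrix.mulVecLin_zero]
    apply LinearMap.ext
    intro x
    exact had1 x
  have hdB : d0 * Bm = 0 := by
    apply mulVecLin_inj
    rw [Matrix.mulVecLin_mul, hBmdef, mulVecLin_toMatrix', Matrix.mulVecLin_zero]
    apply LinearMap.ext
    intro x
    exact hbd x
  have hABsum : dm1 * A + Bm * d0 = Rb' := by
    apply mulVecLin_inj
    rw [Matrix.mulVecLin_add, Matrix.mulVecLin_mul, Matrix.mulVecLin_mul, hAdef, hBmdef,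
      mulVecLin_toMatrix', mulVecLin_toMatrix']
    apply LinearMap.ext
    intro x
    exact hsum x
  refine ⟨U0 + A, V0 + Bm, ?_, ?_, ?_⟩
  · rw [Matrix.add_mul, hU0, hAd, add_zero]
  · have : dm1 * (U0 + A) + (V0 + Bm) * d0
        = (dm1 * U0 + V0 * d0) + (dm1 * A + Bm * d0) := by
      rw [Matrix.mul_add, Matrix.add_mul]
      abel
    rw [this, hABsum, hRb'def]
    have h5 : dm1 * U0 + V0 * d0 + (Rb + dm1 * U0 + V0 * d0)
        = Rb + ((dm1 * U0 + dm1 * U0) + (V0 * d0 + V0 * d0)) := by abel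
    rw [h5, mat_add_self, mat_add_self, add_zero, add_zero]
  · rw [Matrix.mul_add, hV0, hdB, add_zero]
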